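/- Let θ: [0,∞) → ℝ be strictly increasing. Let X₀ < X_f and let x₀ = X₀, x₁, ..., xₙ = X_f be a discretized path that is not monotone (i.e., there exists i with x_i < X₀ or x_i > X_f, or the increments change sign). Then there exists a monotone discretized path y₀ = X₀, y₁, ..., yₙ = X_f with ∑_{i=0}^{n-1} θ(|y_{i+1} - y_i|) < ∑_{i=0}^{n-1} θ(|x_{i+1} - x_i|), provided some x_j lies outside [X₀, X_f]. -/
import Mathlib


theorem stmt_2 (θ : ℝ → ℝ) (hmono : StrictMonoOn θ (Set.Ici 0))
    (X₀ Xf : ℝ) (hX : X₀ < Xf) (n : ℕ)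
    (x : ℕ → ℝ) (h0 : x 0 = X₀) (hnf : x n = Xf)
    (hout : ∃ j ≤ n, x j < X₀ ∨ Xf < x j) :
    ∃ y : ℕ → ℝ, y 0 = X₀ ∧ y n = Xf ∧
      (∀ i j, i ≤ j → j ≤ n → y i ≤ y j) ∧
      ∑ i ∈ Finset.range n, θ |y (i + 1) - y i| <
        ∑ i ∈ Finset.range n, θ |x (i + 1) - x i| := by
  obtain ⟨j, hj, hjout⟩ := hout
  set M : ℕ → ℝ := fun i => Nat.rec (x 0) (fun k Mk => max Mk (x (k+1))) i with hM
  have hMsucc : ∀ i, M (i+1) = max (M i) (x (i+1)) := fun i => rfl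
  have hMle : ∀ i, x i ≤ M i := by
    intro i
    cases i with
    | zero => exact le_refl _
    | succ k => rw [hMsucc]; exact le_max_right _ _
  have hMmono : Monotone M := monotone_nat_of_le_succ
    (fun i => by rw [hMsucc]; exact le_max_left _ _)
  have hM0 : M 0 = X₀ := h0
  have hMX0 : ∀ i, X₀ ≤ M i := fun i => hM0 ▸ hMmono (Nat.zero_le i)
  refine ⟨fun i => min Xf (M i), ?_, ?_, ?_, ?_⟩
  · simp [hM0, min_eq_right hX.le]
  · have : Xf ≤ M n := hnf ▸ hMle n
    simp [min_eq_left this]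
  · intro a b hab _
    exact min_le_min le_rfl (hMmono hab)
  · -- key step bound
    have hymono : ∀ i, min Xf (M i) ≤ min Xf (M (i+1)) :=
      fun i => min_le_min le_rfl (hMmono (Nat.le_succ i))
    have hstep : ∀ i, min Xf (M (i+1)) ≤ min Xf (M i) + |x (i+1) - x i| := by
      intro i
      have habs : x (i+1) ≤ x i + |x (i+1) - x i| := by
        have := le_abs_self (x (i+1) - x i); linarith
      have hnn : (0:ℝ) ≤ |x (i+1) - x i| := abs_nonneg _
      have h2 : min Xf (M (i+1)) ≤ Xf := min_le_left _ _
      have h3 : min Xf (M (i+1)) ≤ M (i+1) := min_le_right _ _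
      have h1 : M (i+1) ≤ M i + |x (i+1) - x i| := by
        rw [hMsucc]
        apply max_le
        · linarith
        · linarith [hMle i]
      rcases le_total Xf (M i) with h | h
      · rw [min_eq_left h]; linarith
      · rw [min_eq_right h]; linarith
    have hθle : ∀ i ∈ Finset.range n,
        θ |min Xf (M (i+1)) - min Xf (M i)| ≤ θ |x (i+1) - x i| := by
      intro i _
      have hd : 0 ≤ min Xf (M (i+1)) - min Xf (M i) := sub_nonneg.2 (hymono i)
      rw [abs_of_nonneg hd]
      exact hmono.monotoneOn (Set.mem_Ici.2 hd) (Set.mem_Ici.2 (abs_nonneg _)) (by linarith [hstep i])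
    -- find a strict index
    have hstrict : ∃ i ∈ Finset.range n,
        θ |min Xf (M (i+1)) - min Xf (M i)| < θ |x (i+1) - x i| := by
      have key : ∃ i, i < n ∧ min Xf (M (i+1)) = min Xf (M i) ∧ x (i+1) ≠ x i := by
        rcases hjout with hlt | hgt
        · -- x j < X₀ : take first index dipping below X₀
          have hex : ∃ i, x i < X₀ := ⟨j, hlt⟩
          set i := Nat.find hex with hi
          have hxi : x i < X₀ := Nat.find_spec hex
          have hile : i ≤ j := Nat.find_le hlt
          have hipos : i ≠ 0 := by
            intro h; rw [h, h0] at hxi; linarith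
          obtain ⟨k, hk⟩ : ∃ k, i = k + 1 := ⟨i - 1, by omega⟩
          have hxk : ¬ x k < X₀ := Nat.find_min hex (by omega)
          push_neg at hxk
          refine ⟨k, by omega, ?_, ?_⟩
          · have : M (k+1) = M k := by
              rw [hMsucc]; rw [← hk]
              exact max_eq_left (le_trans hxi.le (le_trans hxk (hMle k)))
            rw [this]
          · rw [← hk]; intro h; rw [h] at hxi; linarith
        · -- Xf < x j : path must move after j, where y is pinned at Xf
          have hjn : j < n := by
            rcases lt_or_eq_of_le hj with h | h
            · exact h
            · exfalso; rw [h, hnf] at hgt; linarith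
          have : ∃ i, j ≤ i ∧ i < n ∧ x (i+1) ≠ x i := by
            by_contra hcon; push_neg at hcon
            have hconst : ∀ m, j + m ≤ n → x (j + m) = x j := by
              intro m
              induction m with
              | zero => simp
              | succ k ih =>
                intro hle
                have : j + (k+1) = (j+k) + 1 := rfl
                rw [this, hcon _ (by omega) (by omega), ih (by omega)]
            have := hconst (n - j) (by omega)
            rw [show j + (n-j) = n from by omega, hnf] at this
            linarith
          obtain ⟨i, hji, hin, hne⟩ := this
          refine ⟨i, hin, ?_, hne⟩
          have h1 : Xf ≤ M i := le_trans hgt.le (le_trans (hMle j) (hMmono hji))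
          have h2 : Xf ≤ M (i+1) := le_trans h1 (hMmono (Nat.le_succ i))
          rw [min_eq_left h1, min_eq_left h2]
      obtain ⟨i, hin, heq, hne⟩ := key
      refine ⟨i, Finset.mem_range.2 hin, ?_⟩
      rw [heq, sub_self, abs_zero]
      exact hmono (Set.mem_Ici.2 le_rfl) (Set.mem_Ici.2 (abs_nonneg _)) (abs_pos.2 (sub_ne_zero.2 hne))
    exact Finset.sum_lt_sum hθle hstrict
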